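/- arXiv:2306.17774 — 2 statements merged into one kernel-verified Lean document; each statement's English description precedes it below -/
import Mathlib

section
/- On the domain D = {(u,v) ∈ ℝ² : v > 0, −v < u < v}, define t := (v+u)²/4, r := v−u, Ω² := (u+v)², R := (u+v)(v−u)/2, ν := ∂_u R = −u, λ := ∂_v R = v, T_{uu} := 4/(u+v)², T_{vv} := 4/(u+v)², T_{uv} := 2/(u+v)². Then on D the following four identities hold: (1) ∂_u∂_v(R²) = −Ω²/2 + R²·T_{uv}; (2) ∂_u∂_v log Ω² = Ω²/(2R²) + 2νλ/R² − 2·T_{uv}; (3) ∂_u(Ω^{−2}ν) = −(1/2)·R·Ω^{−2}·T_{uu}; (4) ∂_v(Ω^{−2}λ) = −(1/2)·R·Ω^{−2}·T_{vv}. -/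
/-- The FLRW conformal factor `Ω² = (u+v)²` in double null gauge. -/
noncomputable def flrwOmega2 (u v : ℝ) : ℝ := (u + v) ^ 2

/-- The FLRW area radius `R = (u+v)(v−u)/2` in double null gauge. -/
noncomputable def flrwR (u v : ℝ) : ℝ := (u + v) * (v - u) / 2

/-- The FLRW energy–momentum component `T_{uu} = 4/(u+v)²`. -/
noncomputable def flrwTuu (u v : ℝ) : ℝ := 4 / (u + v) ^ 2

/-- The FLRW energy–momentum component `T_{vv} = 4/(u+v)²`. -/
noncomputable def flrwTvv (u v : ℝ) : ℝ := 4 / (u + v) ^ 2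

/-- The FLRW energy–momentum component `T_{uv} = 2/(u+v)²`. -/
noncomputable def flrwTuv (u v : ℝ) : ℝ := 2 / (u + v) ^ 2

private lemma flrwR_eq (u v : ℝ) : flrwR u v = (v ^ 2 - u ^ 2) / 2 := by
  unfold flrwR; ring

private lemma hasDerivAt_R_u (v u : ℝ) :
    HasDerivAt (fun u' => flrwR u' v) (-u) u := by
  have he : (fun u' => flrwR u' v) = fun u' : ℝ => (v ^ 2 - u' ^ 2) / 2 := by
    funext x; exact flrwR_eq x v
  rw [he]
  have h2 : HasDerivAt (fun u' : ℝ => u' ^ 2) (2 * u) u := by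
    simpa using hasDerivAt_pow 2 u
  have := (h2.const_sub (v ^ 2)).div_const 2
  exact this.congr_deriv (by ring)

private lemma hasDerivAt_R_v (u v : ℝ) :
    HasDerivAt (fun v' => flrwR u v') v v := by
  have he : (fun v' => flrwR u v') = fun v' : ℝ => (v' ^ 2 - u ^ 2) / 2 := by
    funext x; exact flrwR_eq u x
  rw [he]
  have h2 : HasDerivAt (fun v' : ℝ => v' ^ 2) (2 * v) v := by
    simpa using hasDerivAt_pow 2 v
  have := (h2.sub_const (u ^ 2)).div_const 2
  exact this.congr_deriv (by ring)

/-- **The FLRW solution satisfies the spherically symmetric Einstein equations in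
double null gauge.**  On `D = {(u,v) : v > 0, −v < u < v}`, with `ν = ∂_u R = −u`,
`λ = ∂_v R = v`, the identities
(1) `∂_u∂_v(R²) = −Ω²/2 + R²·T_{uv}`;
(2) `∂_u∂_v log Ω² = Ω²/(2R²) + 2νλ/R² − 2T_{uv}`;
(3) `∂_u(Ω^{−2}ν) = −(1/2)RΩ^{−2}T_{uu}`;
(4) `∂_v(Ω^{−2}λ) = −(1/2)RΩ^{−2}T_{vv}` hold. -/
theorem flrw_satisfies_einstein_double_null :
    ∀ u v : ℝ, 0 < v → -v < u → u < v →
      -- ν := ∂_u R = −u and λ := ∂_v R = v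
      deriv (fun u' => flrwR u' v) u = -u ∧
      deriv (fun v' => flrwR u v') v = v ∧
      -- (1)
      deriv (fun u' => deriv (fun v' => (flrwR u' v') ^ 2) v) u
        = -(flrwOmega2 u v) / 2 + (flrwR u v) ^ 2 * flrwTuv u v ∧
      -- (2)
      deriv (fun u' => deriv (fun v' => Real.log (flrwOmega2 u' v')) v) u
        = flrwOmega2 u v / (2 * (flrwR u v) ^ 2)
          + 2 * (deriv (fun u' => flrwR u' v) u) * (deriv (fun v' => flrwR u v') v)
              / (flrwR u v) ^ 2
          - 2 * flrwTuv u v ∧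
      -- (3)
      deriv (fun u' => (flrwOmega2 u' v)⁻¹ * deriv (fun u'' => flrwR u'' v) u') u
        = -(1 / 2) * flrwR u v * (flrwOmega2 u v)⁻¹ * flrwTuu u v ∧
      -- (4)
      deriv (fun v' => (flrwOmega2 u v')⁻¹ * deriv (fun v'' => flrwR u v'') v') v
        = -(1 / 2) * flrwR u v * (flrwOmega2 u v)⁻¹ * flrwTvv u v := by
  intro u v hv h1 h2
  have hpos : 0 < u + v := by linarith
  have hne : u + v ≠ 0 := ne_of_gt hpos
  have hvu : v - u ≠ 0 := by intro h; linarith [sub_eq_zero.mp h]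
  refine ⟨(hasDerivAt_R_u v u).deriv, (hasDerivAt_R_v u v).deriv, ?_, ?_, ?_, ?_⟩
  · -- (1)
    have hinner : (fun u' => deriv (fun v' => (flrwR u' v') ^ 2) v)
        = fun u' => (v ^ 2 - u' ^ 2) * v := by
      funext u'
      rw [(show HasDerivAt (fun v' => flrwR u' v' ^ 2) _ v from (hasDerivAt_R_v u' v).pow 2).deriv, flrwR_eq]; ring
    rw [hinner]
    have h2' : HasDerivAt (fun u' : ℝ => u' ^ 2) (2 * u) u := by
      simpa using hasDerivAt_pow 2 u
    have hd := ((h2'.const_sub (v ^ 2)).mul_const v)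
    rw [hd.deriv]
    unfold flrwOmega2 flrwR flrwTuv
    field_simp
    ring
  · -- (2)
    have hlog : ∀ u' : ℝ, u' + v ≠ 0 →
        deriv (fun v' => Real.log (flrwOmega2 u' v')) v = 2 / (u' + v) := by
      intro u' h
      have hbase : HasDerivAt (fun v' : ℝ => (u' + v') ^ 2) (2 * (u' + v)) v := by
        have := ((hasDerivAt_id v).const_add u').pow 2
        exact this.congr_deriv (by simp only [id_eq]; ring)
      have hl := hbase.log (pow_ne_zero 2 h)
      unfold flrwOmega2
      rw [hl.deriv]
      field_simp
    have hev : (fun u' => deriv (fun v' => Real.log (flrwOmega2 u' v')) v)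
        =ᶠ[nhds u] fun u' => 2 / (u' + v) := by
      have hc : Continuous fun u' : ℝ => u' + v := by continuity
      have hmem : ∀ᶠ u' in nhds u, 0 < u' + v :=
        hc.continuousAt.eventually (eventually_gt_nhds hpos)
      filter_upwards [hmem] with u' hu'
      exact hlog u' (ne_of_gt hu')
    rw [hev.deriv_eq]
    have hd : HasDerivAt (fun u' : ℝ => 2 / (u' + v)) (2 * (-1 / (u + v) ^ 2)) u := by
      have hi := (((hasDerivAt_id u).add_const v).inv hne).const_mul 2
      have heq : (fun u' : ℝ => 2 / (u' + v)) = fun u' : ℝ => 2 * (u' + v)⁻¹ := by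
        funext x; rw [div_eq_mul_inv]
      rw [heq]
      exact hi
    rw [hd.deriv, (hasDerivAt_R_u v u).deriv, (hasDerivAt_R_v u v).deriv]
    unfold flrwOmega2 flrwR flrwTuv
    field_simp
    ring
  · -- (3)
    have hfun : (fun u' => (flrwOmega2 u' v)⁻¹ * deriv (fun u'' => flrwR u'' v) u')
        = fun u' => ((u' + v) ^ 2)⁻¹ * (-u') := by
      funext x
      rw [(hasDerivAt_R_u v x).deriv]
      rfl
    rw [hfun]
    have hbase : HasDerivAt (fun u' : ℝ => (u' + v) ^ 2) (2 * (u + v)) u := by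
      have := ((hasDerivAt_id u).add_const v).pow 2
      exact this.congr_deriv (by simp only [id_eq]; ring)
    have hinv := hbase.inv (pow_ne_zero 2 hne)
    have hneg : HasDerivAt (fun u' : ℝ => -u') (-1) u := (hasDerivAt_id u).neg
    have hd : HasDerivAt (fun u' : ℝ => ((u' + v) ^ 2)⁻¹ * -u') _ u := hinv.mul hneg
    rw [hd.deriv]
    simp only [Pi.inv_apply]
    unfold flrwOmega2 flrwR flrwTuu
    field_simp
    ring
  · -- (4)
    have hfun : (fun v' => (flrwOmega2 u v')⁻¹ * deriv (fun v'' => flrwR u v'') v')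
        = fun v' => ((u + v') ^ 2)⁻¹ * v' := by
      funext x
      rw [(hasDerivAt_R_v u x).deriv]
      rfl
    rw [hfun]
    have hbase : HasDerivAt (fun v' : ℝ => (u + v') ^ 2) (2 * (u + v)) v := by
      have := ((hasDerivAt_id v).const_add u).pow 2
      exact this.congr_deriv (by simp only [id_eq]; ring)
    have hinv := hbase.inv (pow_ne_zero 2 hne)
    have hd : HasDerivAt (fun v' : ℝ => ((u + v') ^ 2)⁻¹ * v') _ v := hinv.mul (hasDerivAt_id' (x := v))
    rw [hd.deriv]
    simp only [Pi.inv_apply]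
    unfold flrwOmega2 flrwR flrwTvv
    field_simp
    ring
end

section
/- Let c₁, C₁ > 0 and L₀ ≥ 0. There exists K > 0, depending only on c₁, C₁ and L₀, with the following property. Let t ≥ 1, let Ω², R > 0 satisfy R ≥ c₁·t and Ω² ≤ C₁·t, let ε₀ ≥ 0, and let f, f∘ : (0,∞)×[0,∞) → [0,∞) be measurable with |f − f∘| ≤ ε₀ everywhere and f = f∘ outside the set S := {(q,L) : 0 < q ≤ C₁/t, 0 ≤ L ≤ L₀, L² ≤ C₁·Ω²·R²·q²/t}. For h : (0,∞)×[0,∞) → [0,∞) define N_{uu}[h] := (π/2)·R^{−4}·∫₀^∞∫₀^∞ h(q,L)·q·L dL dq, N_{uv}[h] := (π/2)·∫₀^∞∫₀^∞ h(q,L)·L³/(R⁸·q) dL dq, N_{vv}[h] := (π/2)·∫₀^∞∫₀^∞ h(q,L)·L⁵/(R¹²·q³) dL dq. Then, whenever the integrals for f∘ are finite: |N_{uu}[f] − N_{uu}[f∘]| ≤ K·ε₀/t⁶, |N_{uv}[f] − N_{uv}[f∘]| ≤ K·ε₀/t⁸, and |N_{vv}[f] − N_{vv}[f∘]| ≤ K·ε₀/t¹⁰.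 -/
open MeasureTheory Set


lemma key_aux (a L₀ M : ℝ) (ha : 0 ≤ a) (hL₀ : 0 ≤ L₀) (hM : 0 ≤ M)
    (F F₀ : ℝ → ℝ → ℝ)
    (hF : Measurable (Function.uncurry F)) (hF₀ : Measurable (Function.uncurry F₀))
    (hbound : ∀ q L, |F q L - F₀ q L| ≤
      (Ioc (0:ℝ) a ×ˢ Icc (0:ℝ) L₀).indicator (fun _ => M) (q, L))
    (hint : IntegrableOn (fun z : ℝ × ℝ => F₀ z.1 z.2) (Ioi 0 ×ˢ Ici 0)) :
    |(∫ q in Ioi (0:ℝ), ∫ L in Ici (0:ℝ), F q L)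
      - ∫ q in Ioi (0:ℝ), ∫ L in Ici (0:ℝ), F₀ q L| ≤ M * (a * L₀) := by
  set μ := volume.restrict (Ioi (0:ℝ)) with hμ
  set ν := volume.restrict (Ici (0:ℝ)) with hν
  have hprod : (volume : Measure (ℝ × ℝ)).restrict (Ioi 0 ×ˢ Ici 0) = μ.prod ν := by
    rw [hμ, hν, Measure.prod_restrict, ← Measure.volume_eq_prod]
  have hrectmeas : MeasurableSet (Ioc (0:ℝ) a ×ˢ Icc (0:ℝ) L₀) :=
    measurableSet_Ioc.prod measurableSet_Icc
  have hrectvol : (μ.prod ν) (Ioc (0:ℝ) a ×ˢ Icc (0:ℝ) L₀)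
      = ENNReal.ofReal a * ENNReal.ofReal L₀ := by
    rw [Measure.prod_prod, hμ, hν, Measure.restrict_apply measurableSet_Ioc,
      Measure.restrict_apply measurableSet_Icc,
      inter_eq_left.mpr Ioc_subset_Ioi_self, inter_eq_left.mpr Icc_subset_Ici_self,
      Real.volume_Ioc, Real.volume_Icc, sub_zero, sub_zero]
  have hg : Integrable ((Ioc (0:ℝ) a ×ˢ Icc (0:ℝ) L₀).indicator (fun _ => M)) (μ.prod ν) := by
    rw [integrable_indicator_iff hrectmeas]
    refine integrableOn_const ?_
    rw [hrectvol]
    exact ENNReal.mul_ne_top ENNReal.ofReal_ne_top ENNReal.ofReal_ne_top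
  have hD : Integrable (fun z : ℝ × ℝ => F z.1 z.2 - F₀ z.1 z.2) (μ.prod ν) := by
    refine hg.mono' ((hF.sub hF₀).aestronglyMeasurable) ?_
    filter_upwards with z
    rw [Real.norm_eq_abs]
    exact hbound z.1 z.2
  have hint' : Integrable (fun z : ℝ × ℝ => F₀ z.1 z.2) (μ.prod ν) := by
    rw [← hprod]; exact hint
  have hFint : Integrable (fun z : ℝ × ℝ => F z.1 z.2) (μ.prod ν) := by
    have : (fun z : ℝ × ℝ => F z.1 z.2)
        = fun z => F₀ z.1 z.2 + (F z.1 z.2 - F₀ z.1 z.2) := by funext z; ring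
    rw [this]; exact hint'.add hD
  have h1 : (∫ q in Ioi (0:ℝ), ∫ L in Ici (0:ℝ), F q L)
      = ∫ z : ℝ × ℝ, F z.1 z.2 ∂(μ.prod ν) := (integral_prod _ hFint).symm
  have h2 : (∫ q in Ioi (0:ℝ), ∫ L in Ici (0:ℝ), F₀ q L)
      = ∫ z : ℝ × ℝ, F₀ z.1 z.2 ∂(μ.prod ν) := (integral_prod _ hint').symm
  rw [h1, h2, ← integral_sub hFint hint']
  calc |∫ z : ℝ × ℝ, (F z.1 z.2 - F₀ z.1 z.2) ∂(μ.prod ν)|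
      ≤ ∫ z : ℝ × ℝ, |F z.1 z.2 - F₀ z.1 z.2| ∂(μ.prod ν) := by
        rw [← Real.norm_eq_abs]
        exact (norm_integral_le_integral_norm _).trans (le_of_eq (by simp [Real.norm_eq_abs]))
    _ ≤ ∫ z : ℝ × ℝ, (Ioc (0:ℝ) a ×ˢ Icc (0:ℝ) L₀).indicator (fun _ => M) z ∂(μ.prod ν) := by
        refine integral_mono hD.abs hg ?_
        intro z; exact hbound z.1 z.2
    _ = ((μ.prod ν) (Ioc (0:ℝ) a ×ˢ Icc (0:ℝ) L₀)).toReal • M :=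
        integral_indicator_const _ hrectmeas
    _ = (a * L₀) * M := by
        rw [hrectvol, ENNReal.toReal_mul, ENNReal.toReal_ofReal ha,
          ENNReal.toReal_ofReal hL₀, smul_eq_mul]
    _ = M * (a * L₀) := by ring

lemma wrap_aux (pref A B M KK ε₀ T : ℝ) (hpref : 0 ≤ pref)
    (hAB : |A - B| ≤ M) (hfin : pref * M ≤ KK * ε₀ / T) :
    |pref * A - pref * B| ≤ KK * ε₀ / T := by
  have e : pref * A - pref * B = pref * (A - B) := by ring
  rw [e, abs_mul, abs_of_nonneg hpref]
  exact le_trans (mul_le_mul_of_nonneg_left hAB hpref) hfin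


lemma weight_uv_aux (C₁ L₀ t Om2 R q L : ℝ) (hC₁ : 0 < C₁) (hL₀ : 0 ≤ L₀)
    (ht0 : 0 < t) (hR : 0 < R) (hOmle : Om2 ≤ C₁ * t)
    (hq0 : 0 < q) (hqle : q ≤ C₁ / t) (hLle : L ≤ L₀)
    (hL2 : L ^ 2 ≤ C₁ * Om2 * R ^ 2 * q ^ 2 / t) :
    L ^ 3 / (R ^ 8 * q) ≤ L₀ * C₁ ^ 3 / (R ^ 6 * t) := by
  rw [div_le_div_iff₀ (mul_pos (pow_pos hR 8) hq0) (mul_pos (pow_pos hR 6) ht0)]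
  have A : L ^ 2 * t ≤ C₁ * Om2 * R ^ 2 * q ^ 2 := (le_div_iff₀ ht0).mp hL2
  have hqt : q * t ≤ C₁ := (le_div_iff₀ ht0).mp hqle
  have b1 : L * (L ^ 2 * t) ≤ L₀ * (C₁ * Om2 * R ^ 2 * q ^ 2) :=
    mul_le_mul hLle A (mul_nonneg (sq_nonneg L) ht0.le) hL₀
  have hOq : Om2 * q ^ 2 ≤ C₁ ^ 2 * q := by
    nlinarith [mul_le_mul_of_nonneg_right hOmle (sq_nonneg q),
      mul_le_mul_of_nonneg_left hqt (mul_pos hC₁ hq0).le]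
  nlinarith [mul_le_mul_of_nonneg_right b1 (pow_nonneg hR.le 6),
    mul_le_mul_of_nonneg_left hOq
      (mul_nonneg (mul_nonneg hL₀ hC₁.le) (pow_nonneg hR.le 8))]

lemma weight_vv_aux (C₁ L₀ t Om2 R q L : ℝ) (hC₁ : 0 < C₁) (hL₀ : 0 ≤ L₀)
    (ht0 : 0 < t) (hOm2 : 0 < Om2) (hR : 0 < R) (hOmle : Om2 ≤ C₁ * t)
    (hq0 : 0 < q) (hqle : q ≤ C₁ / t) (hLle : L ≤ L₀)
    (hL2 : L ^ 2 ≤ C₁ * Om2 * R ^ 2 * q ^ 2 / t) :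
    L ^ 5 / (R ^ 12 * q ^ 3) ≤ L₀ * C₁ ^ 5 / (R ^ 8 * t) := by
  rw [div_le_div_iff₀ (mul_pos (pow_pos hR 12) (pow_pos hq0 3)) (mul_pos (pow_pos hR 8) ht0)]
  have A : L ^ 2 * t ≤ C₁ * Om2 * R ^ 2 * q ^ 2 := (le_div_iff₀ ht0).mp hL2
  have hqt : q * t ≤ C₁ := (le_div_iff₀ ht0).mp hqle
  have s2 : (L ^ 2 * t) * (L ^ 2 * t)
      ≤ (C₁ * Om2 * R ^ 2 * q ^ 2) * (C₁ * Om2 * R ^ 2 * q ^ 2) :=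
    mul_self_le_mul_self (mul_nonneg (sq_nonneg L) ht0.le) A
  have s4 : L * ((L ^ 2 * t) * (L ^ 2 * t))
      ≤ L₀ * ((C₁ * Om2 * R ^ 2 * q ^ 2) * (C₁ * Om2 * R ^ 2 * q ^ 2)) :=
    mul_le_mul hLle s2
      (mul_nonneg (mul_nonneg (sq_nonneg L) ht0.le) (mul_nonneg (sq_nonneg L) ht0.le)) hL₀
  have s3 : Om2 * Om2 ≤ (C₁ * t) * (C₁ * t) := mul_self_le_mul_self hOm2.le hOmle
  have s6 : L ^ 5 * t ^ 2 ≤ L₀ * C₁ ^ 4 * R ^ 4 * q ^ 4 * t ^ 2 := by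
    nlinarith [s4, mul_le_mul_of_nonneg_left s3
      (mul_nonneg (mul_nonneg (mul_nonneg hL₀ (sq_nonneg C₁))
        (by positivity : (0:ℝ) ≤ R ^ 4)) (by positivity : (0:ℝ) ≤ q ^ 4))]
  have s5 : L ^ 5 ≤ L₀ * C₁ ^ 4 * R ^ 4 * q ^ 4 := le_of_mul_le_mul_right s6 (pow_pos ht0 2)
  nlinarith [mul_le_mul_of_nonneg_right s5 (mul_nonneg (pow_nonneg hR.le 8) ht0.le),
    mul_le_mul_of_nonneg_left hqt
      (mul_nonneg (mul_nonneg (mul_nonneg hL₀ (by positivity : (0:ℝ) ≤ C₁ ^ 4))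
        (by positivity : (0:ℝ) ≤ R ^ 12)) (pow_nonneg hq0.le 3))]

lemma final_arith_aux (c₁ X P KK Y ε₀ t R : ℝ) (n : ℕ)
    (hXnn : 0 ≤ X * ε₀) (hPnn : 0 ≤ P * ε₀) (hRnn : 0 ≤ R ^ n)
    (hRn : c₁ ^ n * t ^ n ≤ R ^ n)
    (hY : X * ε₀ * (c₁ ^ n * t ^ n) = Y)
    (hKX : KK = X + P) :
    Y ≤ KK * ε₀ * R ^ n := by
  subst hKX
  nlinarith [mul_le_mul_of_nonneg_left hRn hXnn, mul_nonneg hPnn hRnn]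

set_option maxHeartbeats 2000000 in
/-- **Decay of the gauge-normalised energy–momentum differences.**
Let `c₁, C₁ > 0` and `L₀ ≥ 0`.  There exists `K > 0`, depending only on `c₁, C₁, L₀`,
such that for all `t ≥ 1`, `Ω², R > 0` with `R ≥ c₁t`, `Ω² ≤ C₁t`, `ε₀ ≥ 0`, and
measurable `f, f∘ ≥ 0` on `(0,∞)×[0,∞)` with `|f − f∘| ≤ ε₀` and `f = f∘` outside
`S = {(q,L) : 0 < q ≤ C₁/t, 0 ≤ L ≤ L₀, L² ≤ C₁Ω²R²q²/t}`, whenever the integrals for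
`f∘` are finite one has, with `N_{uu}[h] = (π/2)R^{−4}∫∫ h q L dL dq`,
`N_{uv}[h] = (π/2)∫∫ h L³/(R⁸q) dL dq` and `N_{vv}[h] = (π/2)∫∫ h L⁵/(R¹²q³) dL dq`:
`|N_{uu}[f] − N_{uu}[f∘]| ≤ Kε₀/t⁶`, `|N_{uv}[f] − N_{uv}[f∘]| ≤ Kε₀/t⁸` and
`|N_{vv}[f] − N_{vv}[f∘]| ≤ Kε₀/t¹⁰`. -/
theorem energy_momentum_difference_decay (c₁ C₁ L₀ : ℝ)
    (hc₁ : 0 < c₁) (hC₁ : 0 < C₁) (hL₀ : 0 ≤ L₀) :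
    ∃ K : ℝ, 0 < K ∧
      ∀ (t Om2 R ε₀ : ℝ) (f f₀ : ℝ → ℝ → ℝ),
        1 ≤ t → 0 < Om2 → 0 < R → c₁ * t ≤ R → Om2 ≤ C₁ * t → 0 ≤ ε₀ →
        Measurable (Function.uncurry f) → Measurable (Function.uncurry f₀) →
        (∀ q L, 0 ≤ f q L) → (∀ q L, 0 ≤ f₀ q L) →
        (∀ q L, |f q L - f₀ q L| ≤ ε₀) →
        (∀ q L, ¬(0 < q ∧ q ≤ C₁ / t ∧ 0 ≤ L ∧ L ≤ L₀ ∧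
            L ^ 2 ≤ C₁ * Om2 * R ^ 2 * q ^ 2 / t) → f q L = f₀ q L) →
        IntegrableOn (fun z : ℝ × ℝ => f₀ z.1 z.2 * z.1 * z.2) (Ioi 0 ×ˢ Ici 0) →
        IntegrableOn (fun z : ℝ × ℝ => f₀ z.1 z.2 * z.2 ^ 3 / (R ^ 8 * z.1))
          (Ioi 0 ×ˢ Ici 0) →
        IntegrableOn (fun z : ℝ × ℝ => f₀ z.1 z.2 * z.2 ^ 5 / (R ^ 12 * z.1 ^ 3))
          (Ioi 0 ×ˢ Ici 0) →
        |Real.pi / 2 * (R ^ 4)⁻¹ *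
              (∫ q in Ioi (0 : ℝ), ∫ L in Ici (0 : ℝ), f q L * q * L)
            - Real.pi / 2 * (R ^ 4)⁻¹ *
              (∫ q in Ioi (0 : ℝ), ∫ L in Ici (0 : ℝ), f₀ q L * q * L)|
          ≤ K * ε₀ / t ^ 6 ∧
        |Real.pi / 2 *
              (∫ q in Ioi (0 : ℝ), ∫ L in Ici (0 : ℝ), f q L * L ^ 3 / (R ^ 8 * q))
            - Real.pi / 2 *
              (∫ q in Ioi (0 : ℝ), ∫ L in Ici (0 : ℝ), f₀ q L * L ^ 3 / (R ^ 8 * q))|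
          ≤ K * ε₀ / t ^ 8 ∧
        |Real.pi / 2 *
              (∫ q in Ioi (0 : ℝ), ∫ L in Ici (0 : ℝ), f q L * L ^ 5 / (R ^ 12 * q ^ 3))
            - Real.pi / 2 *
              (∫ q in Ioi (0 : ℝ), ∫ L in Ici (0 : ℝ), f₀ q L * L ^ 5 / (R ^ 12 * q ^ 3))|
          ≤ K * ε₀ / t ^ 10 := by
  refine ⟨Real.pi / 2 * L₀ ^ 2 * (C₁ ^ 2 / c₁ ^ 4 + C₁ ^ 4 / c₁ ^ 6 + C₁ ^ 6 / c₁ ^ 8) + 1,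
    by positivity, ?_⟩
  set K := Real.pi / 2 * L₀ ^ 2 * (C₁ ^ 2 / c₁ ^ 4 + C₁ ^ 4 / c₁ ^ 6 + C₁ ^ 6 / c₁ ^ 8) + 1
    with hK
  intro t Om2 R ε₀ f f₀ ht hOm2 hR hRge hOmle hε hf hf₀ hfpos hf₀pos hdiff hout hI1 hI2 hI3
  have ht0 : (0:ℝ) < t := lt_of_lt_of_le one_pos ht
  have ha : (0:ℝ) ≤ C₁ / t := le_of_lt (div_pos hC₁ ht0)
  have hRn : ∀ n : ℕ, c₁ ^ n * t ^ n ≤ R ^ n := by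
    intro n
    rw [← mul_pow]
    exact pow_le_pow_left₀ (le_of_lt (mul_pos hc₁ ht0)) hRge n
  constructor
  · -- uu component
    set M : ℝ := ε₀ * (C₁ / t) * L₀ with hM
    have hMnn : 0 ≤ M := mul_nonneg (mul_nonneg hε ha) hL₀
    have hb : ∀ q L, |f q L * q * L - f₀ q L * q * L| ≤
        (Ioc (0:ℝ) (C₁/t) ×ˢ Icc (0:ℝ) L₀).indicator (fun _ => M) (q, L) := by
      intro q L
      by_cases hS : 0 < q ∧ q ≤ C₁ / t ∧ 0 ≤ L ∧ L ≤ L₀ ∧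
          L ^ 2 ≤ C₁ * Om2 * R ^ 2 * q ^ 2 / t
      · obtain ⟨hq0, hqle, hL0, hLle, hL2⟩ := hS
        rw [Set.indicator_of_mem (show (q, L) ∈ Ioc (0:ℝ) (C₁/t) ×ˢ Icc (0:ℝ) L₀ from
          ⟨⟨hq0, hqle⟩, hL0, hLle⟩)]
        have e : f q L * q * L - f₀ q L * q * L = (f q L - f₀ q L) * (q * L) := by ring
        rw [e, abs_mul, abs_of_nonneg (mul_nonneg hq0.le hL0)]
        calc |f q L - f₀ q L| * (q * L) ≤ ε₀ * ((C₁/t) * L₀) :=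
              mul_le_mul (hdiff q L)
                (mul_le_mul hqle hLle hL0 ha) (mul_nonneg hq0.le hL0) hε
          _ = M := by rw [hM]; ring
      · rw [hout q L hS]
        simp only [sub_self, abs_zero]
        exact Set.indicator_nonneg (fun _ _ => hMnn) _
    have hkey := key_aux (C₁/t) L₀ M ha hL₀ hMnn
      (fun q L => f q L * q * L) (fun q L => f₀ q L * q * L)
      ((hf.mul measurable_fst).mul measurable_snd)
      ((hf₀.mul measurable_fst).mul measurable_snd) hb hI1
    refine wrap_aux _ _ _ _ _ _ _ (by positivity) hkey ?_
    rw [le_div_iff₀ (pow_pos ht0 6), hM]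
    have e1 : Real.pi / 2 * (R ^ 4)⁻¹ * (ε₀ * (C₁/t) * L₀ * (C₁/t * L₀)) * t ^ 6
        = Real.pi / 2 * ε₀ * C₁ ^ 2 * L₀ ^ 2 * t ^ 4 / R ^ 4 := by
      field_simp
    rw [e1, div_le_iff₀ (pow_pos hR 4), hK]
    exact final_arith_aux c₁ (Real.pi / 2 * L₀ ^ 2 * (C₁ ^ 2 / c₁ ^ 4))
      (Real.pi / 2 * L₀ ^ 2 * (C₁ ^ 4 / c₁ ^ 6 + C₁ ^ 6 / c₁ ^ 8) + 1) _ _ ε₀ t R 4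
      (mul_nonneg (by positivity) hε) (mul_nonneg (by positivity) hε)
      (by positivity) (hRn 4) (by field_simp) (by ring)
  constructor
  · -- uv component
    set M : ℝ := ε₀ * (L₀ * C₁ ^ 3 / (R ^ 6 * t)) with hM
    have hMnn : 0 ≤ M := mul_nonneg hε (div_nonneg (mul_nonneg hL₀ (by positivity))
      (mul_nonneg (by positivity) ht0.le))
    have hb : ∀ q L, |f q L * L ^ 3 / (R ^ 8 * q) - f₀ q L * L ^ 3 / (R ^ 8 * q)| ≤
        (Ioc (0:ℝ) (C₁/t) ×ˢ Icc (0:ℝ) L₀).indicator (fun _ => M) (q, L) := by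
      intro q L
      by_cases hS : 0 < q ∧ q ≤ C₁ / t ∧ 0 ≤ L ∧ L ≤ L₀ ∧
          L ^ 2 ≤ C₁ * Om2 * R ^ 2 * q ^ 2 / t
      · obtain ⟨hq0, hqle, hL0, hLle, hL2⟩ := hS
        rw [Set.indicator_of_mem (show (q, L) ∈ Ioc (0:ℝ) (C₁/t) ×ˢ Icc (0:ℝ) L₀ from
          ⟨⟨hq0, hqle⟩, hL0, hLle⟩), hM]
        have e : f q L * L ^ 3 / (R ^ 8 * q) - f₀ q L * L ^ 3 / (R ^ 8 * q)
            = (f q L - f₀ q L) * (L ^ 3 / (R ^ 8 * q)) := by ring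
        have wnn : 0 ≤ L ^ 3 / (R ^ 8 * q) :=
          div_nonneg (pow_nonneg hL0 3) (mul_nonneg (by positivity) hq0.le)
        rw [e, abs_mul, abs_of_nonneg wnn]
        exact mul_le_mul (hdiff q L)
          (weight_uv_aux C₁ L₀ t Om2 R q L hC₁ hL₀ ht0 hR hOmle hq0 hqle hLle hL2) wnn hε
      · rw [hout q L hS]
        simp only [sub_self, abs_zero]
        exact Set.indicator_nonneg (fun _ _ => hMnn) _
    have hkey := key_aux (C₁/t) L₀ M ha hL₀ hMnn
      (fun q L => f q L * L ^ 3 / (R ^ 8 * q)) (fun q L => f₀ q L * L ^ 3 / (R ^ 8 * q))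
      (by have h := (hf.mul (measurable_snd.pow_const 3)).div ((measurable_const (a := R ^ 8)).mul measurable_fst); exact h)
      (by have h := (hf₀.mul (measurable_snd.pow_const 3)).div ((measurable_const (a := R ^ 8)).mul measurable_fst); exact h) hb hI2
    refine wrap_aux _ _ _ _ _ _ _ (by positivity) hkey ?_
    rw [le_div_iff₀ (pow_pos ht0 8), hM]
    have e1 : Real.pi / 2 * (ε₀ * (L₀ * C₁ ^ 3 / (R ^ 6 * t)) * (C₁/t * L₀)) * t ^ 8
        = Real.pi / 2 * ε₀ * C₁ ^ 4 * L₀ ^ 2 * t ^ 6 / R ^ 6 := by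
      field_simp
    rw [e1, div_le_iff₀ (pow_pos hR 6), hK]
    exact final_arith_aux c₁ (Real.pi / 2 * L₀ ^ 2 * (C₁ ^ 4 / c₁ ^ 6))
      (Real.pi / 2 * L₀ ^ 2 * (C₁ ^ 2 / c₁ ^ 4 + C₁ ^ 6 / c₁ ^ 8) + 1) _ _ ε₀ t R 6
      (mul_nonneg (by positivity) hε) (mul_nonneg (by positivity) hε)
      (by positivity) (hRn 6) (by field_simp) (by ring)
  · -- vv component
    set M : ℝ := ε₀ * (L₀ * C₁ ^ 5 / (R ^ 8 * t)) with hM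
    have hMnn : 0 ≤ M := mul_nonneg hε (div_nonneg (mul_nonneg hL₀ (by positivity))
      (mul_nonneg (by positivity) ht0.le))
    have hb : ∀ q L, |f q L * L ^ 5 / (R ^ 12 * q ^ 3) - f₀ q L * L ^ 5 / (R ^ 12 * q ^ 3)| ≤
        (Ioc (0:ℝ) (C₁/t) ×ˢ Icc (0:ℝ) L₀).indicator (fun _ => M) (q, L) := by
      intro q L
      by_cases hS : 0 < q ∧ q ≤ C₁ / t ∧ 0 ≤ L ∧ L ≤ L₀ ∧
          L ^ 2 ≤ C₁ * Om2 * R ^ 2 * q ^ 2 / t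
      · obtain ⟨hq0, hqle, hL0, hLle, hL2⟩ := hS
        rw [Set.indicator_of_mem (show (q, L) ∈ Ioc (0:ℝ) (C₁/t) ×ˢ Icc (0:ℝ) L₀ from
          ⟨⟨hq0, hqle⟩, hL0, hLle⟩), hM]
        have e : f q L * L ^ 5 / (R ^ 12 * q ^ 3) - f₀ q L * L ^ 5 / (R ^ 12 * q ^ 3)
            = (f q L - f₀ q L) * (L ^ 5 / (R ^ 12 * q ^ 3)) := by ring
        have wnn : 0 ≤ L ^ 5 / (R ^ 12 * q ^ 3) :=
          div_nonneg (pow_nonneg hL0 5) (mul_nonneg (by positivity) (pow_nonneg hq0.le 3))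
        rw [e, abs_mul, abs_of_nonneg wnn]
        exact mul_le_mul (hdiff q L)
          (weight_vv_aux C₁ L₀ t Om2 R q L hC₁ hL₀ ht0 hOm2 hR hOmle hq0 hqle hLle hL2) wnn hε
      · rw [hout q L hS]
        simp only [sub_self, abs_zero]
        exact Set.indicator_nonneg (fun _ _ => hMnn) _
    have hkey := key_aux (C₁/t) L₀ M ha hL₀ hMnn
      (fun q L => f q L * L ^ 5 / (R ^ 12 * q ^ 3)) (fun q L => f₀ q L * L ^ 5 / (R ^ 12 * q ^ 3))
      (by have h := (hf.mul (measurable_snd.pow_const 5)).div ((measurable_const (a := R ^ 12)).mul (measurable_fst.pow_const 3)); exact h)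
      (by have h := (hf₀.mul (measurable_snd.pow_const 5)).div ((measurable_const (a := R ^ 12)).mul (measurable_fst.pow_const 3)); exact h) hb hI3
    refine wrap_aux _ _ _ _ _ _ _ (by positivity) hkey ?_
    rw [le_div_iff₀ (pow_pos ht0 10), hM]
    have e1 : Real.pi / 2 * (ε₀ * (L₀ * C₁ ^ 5 / (R ^ 8 * t)) * (C₁/t * L₀)) * t ^ 10
        = Real.pi / 2 * ε₀ * C₁ ^ 6 * L₀ ^ 2 * t ^ 8 / R ^ 8 := by
      field_simp
    rw [e1, div_le_iff₀ (pow_pos hR 8), hK]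
    exact final_arith_aux c₁ (Real.pi / 2 * L₀ ^ 2 * (C₁ ^ 6 / c₁ ^ 8))
      (Real.pi / 2 * L₀ ^ 2 * (C₁ ^ 2 / c₁ ^ 4 + C₁ ^ 4 / c₁ ^ 6) + 1) _ _ ε₀ t R 8
      (mul_nonneg (by positivity) hε) (mul_nonneg (by positivity) hε)
      (by positivity) (hRn 8) (by field_simp) (by ring)
end
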